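/- Let a, b > 0 and c₁, c₂ ∈ ℝ with |c₂| ≥ |c₁|. For μ_s ∈ (0,1], μ ∈ (0,1], φ ∈ [0,2π), define σ_M = (1/(2 μ μ_s)) [[1 + κ_s cos φ, -κ_s sin φ], [-κ_s sin φ, 1 - κ_s cos φ]], κ_s = sqrt(1 - μ_s²). Then the largest eigenvalue of diag(c₁,c₂)ᵀ (b·I₂ + σ_M)⁻¹ diag(c₁,c₂) over all such σ_M has supremum c₂²/b, attained in the limit μ_s → 0 with φ = 0. -/

import Mathlib

open Matrix Real Filter

noncomputable section

/-- Largest eigenvalue of a (symmetric) 2×2 real matrix via trace/determinant. -/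
def maxEig (M : Matrix (Fin 2) (Fin 2) ℝ) : ℝ :=
  (M.trace + Real.sqrt (M.trace ^ 2 - 4 * M.det)) / 2

/-- General Gaussian measurement covariance matrix with purity `μ`, squeezing `μs`,
phase `φ`. -/
def measCM (μ μs φ : ℝ) : Matrix (Fin 2) (Fin 2) ℝ :=
  (1 / (2 * μ * μs)) •
    !![1 + Real.sqrt (1 - μs ^ 2) * Real.cos φ, -(Real.sqrt (1 - μs ^ 2) * Real.sin φ);
       -(Real.sqrt (1 - μs ^ 2) * Real.sin φ), 1 - Real.sqrt (1 - μs ^ 2) * Real.cos φ]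

-- Layer 1: abstract inequality
lemma maxEig_le_aux (b c₁ c₂ u v w d : ℝ) (hb : 0 < b) (hd : 0 < d)
    (hvu : v * u - w * w = d)
    (h2 : 0 ≤ 2 * c₂ ^ 2 * d - b * (c₁ ^ 2 * u + c₂ ^ 2 * v))
    (hP : 0 ≤ c₂ ^ 2 * c₂ ^ 2 * d - b * c₂ ^ 2 * (c₁ ^ 2 * u + c₂ ^ 2 * v) + b ^ 2 * c₁ ^ 2 * c₂ ^ 2) :
    maxEig (!![c₁, (0:ℝ); 0, c₂] * (!![v, -w; -w, u])⁻¹ * !![c₁, 0; 0, c₂]) ≤ c₂ ^ 2 / b := by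
  have hd0 : d ≠ 0 := hd.ne'
  have hb0 : b ≠ 0 := hb.ne'
  have hinv : (!![v, -w; -w, u])⁻¹ = d⁻¹ • !![u, w; w, v] := by
    apply inv_eq_right_inv
    ext i j
    fin_cases i <;> fin_cases j <;>
      simp [Matrix.mul_apply, Fin.sum_univ_two, Matrix.one_apply] <;>
      field_simp <;> first | linear_combination -hvu | linear_combination (d-1)*hvu | linear_combination hvu | linear_combination d*hvu | ring
  rw [hinv]
  have hM : !![c₁, (0:ℝ); 0, c₂] * (d⁻¹ • !![u, w; w, v]) * !![c₁, 0; 0, c₂]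
      = d⁻¹ • !![c₁ ^ 2 * u, c₁ * c₂ * w; c₁ * c₂ * w, c₂ ^ 2 * v] := by
    ext i j
    fin_cases i <;> fin_cases j <;>
      simp [Matrix.mul_apply, Fin.sum_univ_two] <;> ring
  rw [hM]
  unfold maxEig
  rw [Matrix.trace_smul, Matrix.det_smul]
  rw [Matrix.trace_fin_two_of, Matrix.det_fin_two_of]
  simp only [smul_eq_mul, Fintype.card_fin]
  have hdet2 : c₁ ^ 2 * u * (c₂ ^ 2 * v) - c₁ * c₂ * w * (c₁ * c₂ * w) = c₁ ^ 2 * c₂ ^ 2 * d := by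
    linear_combination (c₁ ^ 2 * c₂ ^ 2) * hvu
  rw [hdet2]
  set T := d⁻¹ * (c₁ ^ 2 * u + c₂ ^ 2 * v) with hT
  have hR : T ≤ 2 * c₂ ^ 2 / b := by
    rw [hT, inv_mul_eq_div, div_le_div_iff₀ hd hb]
    nlinarith [h2]
  have hsq : T ^ 2 - 4 * (d⁻¹ ^ 2 * (c₁ ^ 2 * c₂ ^ 2 * d)) ≤ (2 * c₂ ^ 2 / b - T) ^ 2 := by
    have he : (2 * c₂ ^ 2 / b - T) ^ 2 - (T ^ 2 - 4 * (d⁻¹ ^ 2 * (c₁ ^ 2 * c₂ ^ 2 * d)))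
        = 4 * (c₂ ^ 2 * c₂ ^ 2 * d - b * c₂ ^ 2 * (c₁ ^ 2 * u + c₂ ^ 2 * v)
            + b ^ 2 * c₁ ^ 2 * c₂ ^ 2) / (b ^ 2 * d) := by
      rw [hT]; field_simp; ring
    have h4 : 0 ≤ 4 * (c₂ ^ 2 * c₂ ^ 2 * d - b * c₂ ^ 2 * (c₁ ^ 2 * u + c₂ ^ 2 * v)
        + b ^ 2 * c₁ ^ 2 * c₂ ^ 2) / (b ^ 2 * d) :=
      div_nonneg (by linarith) (by positivity)
    linarith
  have hs2 : Real.sqrt (T ^ 2 - 4 * (d⁻¹ ^ 2 * (c₁ ^ 2 * c₂ ^ 2 * d))) ≤ 2 * c₂ ^ 2 / b - T :=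
    Real.sqrt_le_iff.mpr ⟨by linarith, hsq⟩
  have hring : 2 * c₂ ^ 2 / b = 2 * (c₂ ^ 2 / b) := by ring
  linarith [hs2]

lemma key_le (b c₁ c₂ s k cφ sφ : ℝ) (hb : 0 < b) (hs : 0 < s) (hk0 : 0 ≤ k) (hk1 : k ≤ 1)
    (htrig : cφ ^ 2 + sφ ^ 2 = 1) (hc : c₁ ^ 2 ≤ c₂ ^ 2) :
    maxEig (!![c₁, (0:ℝ); 0, c₂] *
      (!![b + s * (1 + k * cφ), -(s * (k * sφ)); -(s * (k * sφ)), b + s * (1 - k * cφ)])⁻¹ *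
      !![c₁, 0; 0, c₂]) ≤ c₂ ^ 2 / b := by
  have hk2 : k ^ 2 ≤ 1 := by nlinarith
  have hcφ2 : cφ ^ 2 ≤ 1 := by nlinarith [sq_nonneg sφ]
  have hkcsq : (k * cφ) ^ 2 ≤ 1 := by nlinarith [sq_nonneg k, sq_nonneg cφ]
  have hkc1 : k * cφ ≤ 1 := by nlinarith [sq_nonneg (k * cφ - 1)]
  have hd : (0:ℝ) < (b + s) ^ 2 - s ^ 2 * k ^ 2 := by nlinarith [mul_pos hb hs, sq_nonneg s]
  have hc2 : (0:ℝ) ≤ c₂ ^ 2 := sq_nonneg _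
  have hu : (0:ℝ) ≤ b + s * (1 - k * cφ) := by nlinarith
  apply maxEig_le_aux b c₁ c₂ (b + s * (1 - k * cφ)) (b + s * (1 + k * cφ)) (s * (k * sφ))
      ((b + s) ^ 2 - s ^ 2 * k ^ 2) hb hd
  · linear_combination (-(s ^ 2 * k ^ 2)) * htrig
  · have hid : 2 * c₂ ^ 2 * ((b + s) ^ 2 - s ^ 2 * k ^ 2)
        - b * (c₁ ^ 2 * (b + s * (1 - k * cφ)) + c₂ ^ 2 * (b + s * (1 + k * cφ)))
        = 2 * c₂ ^ 2 * (s * (b + s - s * k ^ 2)) + b * (c₂ ^ 2 - c₁ ^ 2) * (b + s * (1 - k * cφ)) := by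
      ring
    rw [hid]
    have h1 : (0:ℝ) ≤ s * (b + s - s * k ^ 2) := by nlinarith
    have h2 : (0:ℝ) ≤ b * (c₂ ^ 2 - c₁ ^ 2) * (b + s * (1 - k * cφ)) := by
      apply mul_nonneg (mul_nonneg hb.le (by linarith)) hu
    nlinarith
  · have hid : c₂ ^ 2 * c₂ ^ 2 * ((b + s) ^ 2 - s ^ 2 * k ^ 2)
        - b * c₂ ^ 2 * (c₁ ^ 2 * (b + s * (1 - k * cφ)) + c₂ ^ 2 * (b + s * (1 + k * cφ)))
        + b ^ 2 * c₁ ^ 2 * c₂ ^ 2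
        = c₂ ^ 2 * s * (c₂ ^ 2 * (s * (1 - k ^ 2)) + (c₂ ^ 2 - c₁ ^ 2) * (b * (1 - k * cφ))) := by
      ring
    rw [hid]
    apply mul_nonneg (mul_nonneg hc2 hs.le)
    apply add_nonneg (mul_nonneg hc2 (mul_nonneg hs.le (by linarith)))
    exact mul_nonneg (by linarith) (mul_nonneg hb.le (by linarith))

lemma maxEig_diag (c₁ c₂ x y : ℝ) (hx : 0 < x) (hy : 0 < y) :
    maxEig (!![c₁, (0:ℝ); 0, c₂] * (!![x, 0; 0, y])⁻¹ * !![c₁, 0; 0, c₂])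
      = max (c₁ ^ 2 / x) (c₂ ^ 2 / y) := by
  have hinv : (!![x, (0:ℝ); 0, y])⁻¹ = !![x⁻¹, 0; 0, y⁻¹] := by
    apply inv_eq_right_inv
    ext i j
    fin_cases i <;> fin_cases j <;>
      simp [Matrix.mul_apply, Fin.sum_univ_two, Matrix.one_apply, hx.ne', hy.ne']
  rw [hinv]
  have hM : !![c₁, (0:ℝ); 0, c₂] * !![x⁻¹, 0; 0, y⁻¹] * !![c₁, 0; 0, c₂]
      = !![c₁ ^ 2 / x, 0; 0, c₂ ^ 2 / y] := by
    ext i j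
    fin_cases i <;> fin_cases j <;>
      simp [Matrix.mul_apply, Fin.sum_univ_two, div_eq_mul_inv] <;> ring
  rw [hM]
  unfold maxEig
  rw [Matrix.trace_fin_two_of, Matrix.det_fin_two_of]
  have he : (c₁ ^ 2 / x + c₂ ^ 2 / y) ^ 2 - 4 * (c₁ ^ 2 / x * (c₂ ^ 2 / y) - 0 * 0)
      = (c₁ ^ 2 / x - c₂ ^ 2 / y) ^ 2 := by ring
  rw [he, Real.sqrt_sq_eq_abs]
  rcases le_total (c₁ ^ 2 / x) (c₂ ^ 2 / y) with h | h
  · rw [max_eq_right h, abs_of_nonpos (by linarith)]; ring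
  · rw [max_eq_left h, abs_of_nonneg (by linarith)]; ring

lemma diag_eq (c₁ c₂ : ℝ) : Matrix.diagonal ![c₁, c₂] = !![c₁, 0; 0, c₂] := by
  ext i j; fin_cases i <;> fin_cases j <;> simp [Matrix.diagonal]

lemma matA (b μ μs φ : ℝ) :
    b • (1 : Matrix (Fin 2) (Fin 2) ℝ) + measCM μ μs φ =
    !![b + 1 / (2 * μ * μs) * (1 + Real.sqrt (1 - μs ^ 2) * Real.cos φ),
       -(1 / (2 * μ * μs) * (Real.sqrt (1 - μs ^ 2) * Real.sin φ));
       -(1 / (2 * μ * μs) * (Real.sqrt (1 - μs ^ 2) * Real.sin φ)),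
       b + 1 / (2 * μ * μs) * (1 - Real.sqrt (1 - μs ^ 2) * Real.cos φ)] := by
  ext i j
  fin_cases i <;> fin_cases j <;>
    simp [measCM, Matrix.one_apply] <;> ring

lemma matA0 (b μ μs : ℝ) :
    b • (1 : Matrix (Fin 2) (Fin 2) ℝ) + measCM μ μs 0 =
    !![b + 1 / (2 * μ * μs) * (1 + Real.sqrt (1 - μs ^ 2)), 0;
       0, b + 1 / (2 * μ * μs) * (1 - Real.sqrt (1 - μs ^ 2))] := by
  ext i j
  fin_cases i <;> fin_cases j <;>
    simp [measCM, Matrix.one_apply] <;> ring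


lemma tendsto_part (b c₁ c₂ μ : ℝ) (hb : 0 < b) (hμ : 0 < μ) :
    Tendsto (fun μs : ℝ => maxEig (!![c₁, (0:ℝ); 0, c₂] *
        (b • (1 : Matrix (Fin 2) (Fin 2) ℝ) + measCM μ μs 0)⁻¹ * !![c₁, 0; 0, c₂]))
      (nhdsWithin 0 (Set.Ioi 0)) (nhds (c₂ ^ 2 / b)) := by
  have hev : ∀ᶠ μs in nhdsWithin (0:ℝ) (Set.Ioi 0), μs ∈ Set.Ioo (0:ℝ) 1 :=
    Ioo_mem_nhdsGT_of_mem ⟨le_refl 0, zero_lt_one⟩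
  have heq : ∀ μs ∈ Set.Ioo (0:ℝ) 1,
      max (c₁ ^ 2 / (b + (1 + Real.sqrt (1 - μs ^ 2)) / (2 * μ * μs)))
        (c₂ ^ 2 / (b + μs / (2 * μ * (1 + Real.sqrt (1 - μs ^ 2)))))
      = maxEig (!![c₁, (0:ℝ); 0, c₂] *
        (b • (1 : Matrix (Fin 2) (Fin 2) ℝ) + measCM μ μs 0)⁻¹ * !![c₁, 0; 0, c₂]) := by
    intro μs hμs
    have hμs0 : 0 < μs := hμs.1
    have hk0 : 0 ≤ Real.sqrt (1 - μs ^ 2) := Real.sqrt_nonneg _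
    have hk1 : Real.sqrt (1 - μs ^ 2) ≤ 1 := Real.sqrt_le_one.2 (by nlinarith)
    have hk2 : Real.sqrt (1 - μs ^ 2) ^ 2 = 1 - μs ^ 2 := Real.sq_sqrt (by nlinarith [hμs.2])
    have hs : (0:ℝ) < 1 / (2 * μ * μs) := by positivity
    have hx : (0:ℝ) < b + 1 / (2 * μ * μs) * (1 + Real.sqrt (1 - μs ^ 2)) := by nlinarith
    have hy : (0:ℝ) < b + 1 / (2 * μ * μs) * (1 - Real.sqrt (1 - μs ^ 2)) := by nlinarith
    rw [matA0, maxEig_diag c₁ c₂ _ _ hx hy]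
    have e1 : b + 1 / (2 * μ * μs) * (1 + Real.sqrt (1 - μs ^ 2))
        = b + (1 + Real.sqrt (1 - μs ^ 2)) / (2 * μ * μs) := by ring
    have e2 : b + 1 / (2 * μ * μs) * (1 - Real.sqrt (1 - μs ^ 2))
        = b + μs / (2 * μ * (1 + Real.sqrt (1 - μs ^ 2))) := by
      have h1k : (0:ℝ) < 1 + Real.sqrt (1 - μs ^ 2) := by linarith
      field_simp
      first
        | linear_combination (-(2*μ)) * hk2
        | linear_combination (2*μ) * hk2
        | linear_combination (2*μ*μs) * hk2
        | linear_combination (-(2*μ*μs)) * hk2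
        | linear_combination (4*μ^2*μs) * hk2
        | linear_combination (-(4*μ^2*μs)) * hk2
        | linear_combination (-1 : ℝ) * hk2
        | ring
    rw [e1, e2]
  -- limits
  have T1 : Tendsto (fun μs : ℝ => c₁ ^ 2 / (b + (1 + Real.sqrt (1 - μs ^ 2)) / (2 * μ * μs)))
      (nhdsWithin 0 (Set.Ioi 0)) (nhds 0) := by
    apply Filter.Tendsto.div_atTop tendsto_const_nhds
    apply tendsto_atTop_add_const_left
    have hnum : Tendsto (fun μs : ℝ => 1 + Real.sqrt (1 - μs ^ 2))
        (nhdsWithin 0 (Set.Ioi 0)) (nhds 2) := by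
      have : Continuous fun μs : ℝ => 1 + Real.sqrt (1 - μs ^ 2) := by continuity
      have h : Tendsto (fun μs : ℝ => 1 + Real.sqrt (1 - μs ^ 2)) (nhds (0:ℝ))
          (nhds (1 + Real.sqrt (1 - (0:ℝ) ^ 2))) := this.tendsto 0
      norm_num [Real.sqrt_one] at h
      exact h.mono_left nhdsWithin_le_nhds
    have hdenomInv : Tendsto (fun μs : ℝ => (2 * μ * μs)⁻¹)
        (nhdsWithin (0:ℝ) (Set.Ioi 0)) atTop := by
      have h2 : Tendsto (fun μs : ℝ => (2 * μ)⁻¹ * μs⁻¹) (nhdsWithin (0:ℝ) (Set.Ioi 0)) atTop :=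
        (tendsto_inv_nhdsGT_zero).const_mul_atTop (by positivity)
      exact h2.congr fun μs => (mul_inv (2 * μ) μs).symm
    have := Filter.Tendsto.pos_mul_atTop (by norm_num : (0:ℝ) < 2) hnum hdenomInv
    refine this.congr fun μs => ?_
    rw [div_eq_mul_inv]
  have T2 : Tendsto (fun μs : ℝ => c₂ ^ 2 / (b + μs / (2 * μ * (1 + Real.sqrt (1 - μs ^ 2)))))
      (nhdsWithin 0 (Set.Ioi 0)) (nhds (c₂ ^ 2 / b)) := by
    have hden : Tendsto (fun μs : ℝ => b + μs / (2 * μ * (1 + Real.sqrt (1 - μs ^ 2))))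
        (nhdsWithin 0 (Set.Ioi 0)) (nhds b) := by
      have hcont : Continuous fun μs : ℝ => 2 * μ * (1 + Real.sqrt (1 - μs ^ 2)) := by continuity
      have hd : Tendsto (fun μs : ℝ => 2 * μ * (1 + Real.sqrt (1 - μs ^ 2)))
          (nhds (0:ℝ)) (nhds (2 * μ * (1 + 1))) := by
        have := hcont.tendsto 0
        simpa using this
      have hfrac : Tendsto (fun μs : ℝ => μs / (2 * μ * (1 + Real.sqrt (1 - μs ^ 2))))
          (nhds (0:ℝ)) (nhds (0 / (2 * μ * (1 + 1)))) :=
        Filter.Tendsto.div tendsto_id hd (by positivity)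
      have hsum := hfrac.const_add b
      norm_num at hsum
      exact hsum.mono_left nhdsWithin_le_nhds
    exact Filter.Tendsto.div tendsto_const_nhds hden hb.ne'
  have Tm := T1.max T2
  rw [max_eq_right (by positivity : (0:ℝ) ≤ c₂ ^ 2 / b)] at Tm
  exact Tm.congr' (hev.mono fun μs h => heq μs h)

set_option maxHeartbeats 1000000 in
/-- for `a, b > 0`, `|c₂| ≥ |c₁|`, the largest eigenvalue of
`diag(c₁,c₂)ᵀ (b·I₂ + σM)⁻¹ diag(c₁,c₂)` over all measurement covariances `σM`
(with `μ, μs ∈ (0,1]`, `φ ∈ [0,2π)`) has supremum `c₂²/b`, attained in the limit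
`μs → 0⁺` at `φ = 0`. -/
theorem sup_maxEig_eq_and_tendsto (a b c₁ c₂ : ℝ) (ha : 0 < a) (hb : 0 < b)
    (hc : |c₁| ≤ |c₂|) :
    IsLUB
      {x : ℝ | ∃ μ ∈ Set.Ioc (0 : ℝ) 1, ∃ μs ∈ Set.Ioc (0 : ℝ) 1,
        ∃ φ ∈ Set.Ico (0 : ℝ) (2 * Real.pi),
          x = maxEig ((Matrix.diagonal ![c₁, c₂])ᵀ *
            (b • (1 : Matrix (Fin 2) (Fin 2) ℝ) + measCM μ μs φ)⁻¹ *
              Matrix.diagonal ![c₁, c₂])}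
      (c₂ ^ 2 / b) ∧
    ∀ μ ∈ Set.Ioc (0 : ℝ) 1,
      Tendsto
        (fun μs : ℝ =>
          maxEig ((Matrix.diagonal ![c₁, c₂])ᵀ *
            (b • (1 : Matrix (Fin 2) (Fin 2) ℝ) + measCM μ μs 0)⁻¹ *
              Matrix.diagonal ![c₁, c₂]))
        (nhdsWithin 0 (Set.Ioi 0)) (nhds (c₂ ^ 2 / b)) := by
  have hc2 : c₁ ^ 2 ≤ c₂ ^ 2 := by
    rw [← sq_abs c₁, ← sq_abs c₂]
    exact pow_le_pow_left₀ (abs_nonneg _) hc 2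
  have htd : ∀ μ ∈ Set.Ioc (0:ℝ) 1,
      Tendsto (fun μs : ℝ => maxEig ((Matrix.diagonal ![c₁, c₂])ᵀ *
          (b • (1 : Matrix (Fin 2) (Fin 2) ℝ) + measCM μ μs 0)⁻¹ * Matrix.diagonal ![c₁, c₂]))
        (nhdsWithin 0 (Set.Ioi 0)) (nhds (c₂ ^ 2 / b)) := by
    intro μ hμ
    have h := tendsto_part b c₁ c₂ μ hb hμ.1
    rw [Matrix.diagonal_transpose, diag_eq]; exact h
  refine ⟨⟨?_, ?_⟩, htd⟩
  · rintro x ⟨μ, hμ, μs, hμs, φ, hφ, rfl⟩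
    rw [Matrix.diagonal_transpose, diag_eq, matA]
    exact key_le b c₁ c₂ (1 / (2 * μ * μs)) (Real.sqrt (1 - μs ^ 2)) (Real.cos φ) (Real.sin φ)
      hb (by have := hμ.1; have := hμs.1; positivity) (Real.sqrt_nonneg _)
      (Real.sqrt_le_one.2 (by nlinarith [sq_nonneg μs])) (Real.cos_sq_add_sin_sq φ) hc2
  · intro y hy
    have hev : ∀ᶠ μs in nhdsWithin (0:ℝ) (Set.Ioi 0), μs ∈ Set.Ioo (0:ℝ) 1 :=
      Ioo_mem_nhdsGT_of_mem ⟨le_refl 0, zero_lt_one⟩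
    refine le_of_tendsto (htd 1 ⟨zero_lt_one, le_refl 1⟩) ?_
    filter_upwards [hev] with μs hμs
    exact hy ⟨1, ⟨zero_lt_one, le_refl 1⟩, μs, ⟨hμs.1, hμs.2.le⟩, 0,
      ⟨le_refl 0, by positivity⟩, rfl⟩
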